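/- arXiv:2512.24357 — 2 statements merged into one kernel-verified Lean document; each statement's English description precedes it below -/
import Mathlib

section
/- Let k be a field, A a finite-dimensional associative unital k-algebra whose Jacobson radical J satisfies J² = 0, and A_s a k-subalgebra of A such that A = A_s ⊕ J as k-vector spaces (internal direct sum of subspaces). Then the restriction map σ ↦ σ|_J is a group isomorphism from {σ ∈ Aut_k(A) : σ(a) = a for all a ∈ A_s} onto the group of bijective k-linear maps ψ : J → J satisfying ψ(a r b) = a ψ(r) b for all a, b ∈ A_s and r ∈ J (the A_s-bimodule automorphisms of J). -/
noncomputable section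

variable (k A : Type*) [Field k] [Ring A] [Algebra k A]

/-- The Jacobson radical of `A`, viewed as a `k`-submodule of `A`. -/
def jacobsonRadical : Submodule k A :=
  Submodule.restrictScalars k ((⊥ : Ideal A).jacobson)

/-- The Jacobson radical is closed under right multiplication. -/
theorem jacobsonRadical.mul_mem_right {x : A} (b : A) (hx : x ∈ jacobsonRadical k A) :
    x * b ∈ jacobsonRadical k A := by
  have hx' : x ∈ ((⊥ : Ideal A).jacobson) := hx
  rw [Ideal.mem_jacobson_iff] at hx'
  show x * b ∈ ((⊥ : Ideal A).jacobson)
  rw [Ideal.mem_jacobson_iff]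
  intro y
  obtain ⟨u, hu⟩ := hx' (b * y)
  rw [Ideal.mem_bot] at hu
  have hc : u * (b * y) * x + u = 1 := sub_eq_zero.mp hu
  refine ⟨1 - y * x * u * b, ?_⟩
  rw [Ideal.mem_bot]
  have expand : (1 - y * x * u * b) * y * (x * b) + (1 - y * x * u * b) - 1
      = y * x * b - y * x * (u * (b * y) * x + u) * b := by noncomm_ring
  rw [expand, hc]
  noncomm_ring

theorem jacobsonRadical.mul_mem {x y : A} (hx : x ∈ jacobsonRadical k A)
    (hy : y ∈ jacobsonRadical k A) : x * y ∈ jacobsonRadical k A :=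
  Ideal.mul_mem_left _ x hy

/-- The subgroup of `k`-algebra automorphisms of `A` fixing the subalgebra `A_s` pointwise. -/
def fixSubgroup (A_s : Subalgebra k A) : Subgroup (A ≃ₐ[k] A) where
  carrier := {σ | ∀ a ∈ A_s, σ a = a}
  one_mem' := fun _ _ => rfl
  mul_mem' := by
    intro σ τ hσ hτ a ha
    show σ (τ a) = a
    rw [hτ a ha, hσ a ha]
  inv_mem' := by
    intro σ hσ a ha
    show σ.symm a = a
    conv_lhs => rw [← hσ a ha]
    exact σ.symm_apply_apply a

/-- The subgroup of bijective `k`-linear maps `ψ : J → J` such that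
`ψ (a r b) = a · ψ r · b` for `a, b ∈ A_s`, `r ∈ J` (the `A_s`-bimodule automorphisms of `J`). -/
def bimodAutSubgroup (A_s : Subalgebra k A) :
    Subgroup ((jacobsonRadical k A) ≃ₗ[k] (jacobsonRadical k A)) where
  carrier := {ψ |
    ∀ a b : A_s, ∀ r : jacobsonRadical k A,
      ∀ h : (a : A) * (r : A) * (b : A) ∈ jacobsonRadical k A,
      ((ψ ⟨(a : A) * (r : A) * (b : A), h⟩ : A) = (a : A) * (ψ r : A) * (b : A))}
  one_mem' := fun _ _ _ _ => rfl
  mul_mem' := by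
    rintro ψ φ hψ hφ
    intro a b r h
    have hmem : (a : A) * (φ r : A) * (b : A) ∈ jacobsonRadical k A := by
      rw [← hφ a b r h]
      exact (φ ⟨(a : A) * (r : A) * (b : A), h⟩).2
    have key : φ ⟨(a : A) * (r : A) * (b : A), h⟩
        = ⟨(a : A) * (φ r : A) * (b : A), hmem⟩ := Subtype.ext (hφ a b r h)
    show ((ψ (φ _) : A) = _)
    rw [key, hψ a b (φ r) hmem]
    rfl
  inv_mem' := by
    rintro ψ hψ
    intro a b r h
    have hmem : (a : A) * (ψ.symm r : A) * (b : A) ∈ jacobsonRadical k A :=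
      jacobsonRadical.mul_mem_right k A (b : A)
        (Ideal.mul_mem_left _ (a : A) (ψ.symm r).2)
    have key : ψ ⟨(a : A) * (ψ.symm r : A) * (b : A), hmem⟩
        = ⟨(a : A) * (r : A) * (b : A), h⟩ := by
      refine Subtype.ext ?_
      rw [hψ a b (ψ.symm r) hmem]
      simp
    show ((ψ.symm ⟨(a : A) * (r : A) * (b : A), h⟩ : A)
        = (a : A) * (ψ.symm r : A) * (b : A))
    rw [← key, ψ.symm_apply_apply]


section Aux

theorem aux_mapJ (σ : A ≃ₐ[k] A) {x : A} (hx : x ∈ jacobsonRadical k A) :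
    σ x ∈ jacobsonRadical k A := by
  have hx' : x ∈ ((⊥ : Ideal A).jacobson) := hx
  rw [Ideal.mem_jacobson_iff] at hx'
  show σ x ∈ ((⊥ : Ideal A).jacobson)
  rw [Ideal.mem_jacobson_iff]
  intro y
  obtain ⟨z, hz⟩ := hx' (σ.symm y)
  rw [Ideal.mem_bot] at hz
  refine ⟨σ z, ?_⟩
  rw [Ideal.mem_bot]
  have h2 := congrArg σ hz
  simpa [map_sub, map_add, map_mul] using h2

theorem aux_mapJ_eq (σ : A ≃ₐ[k] A) :
    (jacobsonRadical k A).map (σ.toLinearEquiv : A →ₗ[k] A) = jacobsonRadical k A := by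
  apply le_antisymm
  · rintro _ ⟨x, hx, rfl⟩
    exact aux_mapJ k A σ hx
  · intro x hx
    exact ⟨σ.symm x, aux_mapJ k A σ.symm hx, σ.apply_symm_apply x⟩

/-- Restriction of an algebra automorphism to the Jacobson radical. -/
def restEquiv (σ : A ≃ₐ[k] A) : jacobsonRadical k A ≃ₗ[k] jacobsonRadical k A :=
  LinearEquiv.ofSubmodules σ.toLinearEquiv _ _ (aux_mapJ_eq k A σ)

theorem restEquiv_apply (σ : A ≃ₐ[k] A) (x : jacobsonRadical k A) :
    (restEquiv k A σ x : A) = σ x := rfl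

/-- Restriction to `J` as a group homomorphism. -/
def restHom (A_s : Subalgebra k A) : fixSubgroup k A A_s →* bimodAutSubgroup k A A_s where
  toFun σ := ⟨restEquiv k A σ.val, by
    intro a b r h
    show (σ.val : A ≃ₐ[k] A) ((a : A) * r * b) = (a : A) * (σ.val : A ≃ₐ[k] A) r * b
    rw [map_mul, map_mul, σ.2 a a.2, σ.2 b b.2]⟩
  map_one' := by
    refine Subtype.ext (LinearEquiv.ext fun x => Subtype.ext ?_)
    rfl
  map_mul' := by
    intro σ τ
    refine Subtype.ext (LinearEquiv.ext fun x => Subtype.ext ?_)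
    rfl

/-- The linear automorphism of `A` built from a bimodule automorphism of `J`. -/
def buildEquiv (A_s : Subalgebra k A)
    (hcompl : IsCompl (Subalgebra.toSubmodule A_s) (jacobsonRadical k A))
    (ψ : jacobsonRadical k A ≃ₗ[k] jacobsonRadical k A) : A ≃ₗ[k] A :=
  (Submodule.prodEquivOfIsCompl _ _ hcompl).symm ≪≫ₗ
    ((LinearEquiv.refl k _).prodCongr ψ) ≪≫ₗ Submodule.prodEquivOfIsCompl _ _ hcompl

theorem buildEquiv_apply (A_s : Subalgebra k A)
    (hcompl : IsCompl (Subalgebra.toSubmodule A_s) (jacobsonRadical k A))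
    (ψ : jacobsonRadical k A ≃ₗ[k] jacobsonRadical k A)
    (s : Subalgebra.toSubmodule A_s) (r : jacobsonRadical k A) :
    buildEquiv k A A_s hcompl ψ ((s : A) + (r : A)) = (s : A) + (ψ r : A) := by
  have h1 : (Submodule.prodEquivOfIsCompl _ _ hcompl).symm ((s : A) + (r : A)) = (s, r) := by
    rw [LinearEquiv.symm_apply_eq]; rfl
  simp [buildEquiv, h1, Submodule.coe_prodEquivOfIsCompl']

end Aux

/-- paper's Lemma 4.25: when `J² = 0`, `G_{A,A_s} ≅ Aut_{A_s^#-module}(J)`.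
Let `A` be a finite-dimensional associative unital `k`-algebra whose Jacobson radical `J`
satisfies `J² = 0`, and let `A_s` be a subalgebra with `A = A_s ⊕ J` as `k`-vector spaces.
Then the restriction map `σ ↦ σ|_J` is a group isomorphism from the group of `k`-algebra
automorphisms of `A` fixing `A_s` pointwise onto the group of `A_s`-bimodule automorphisms
of `J`. -/
theorem stmt_5 [FiniteDimensional k A] (A_s : Subalgebra k A)
    (hJ2 : ∀ x ∈ (⊥ : Ideal A).jacobson, ∀ y ∈ (⊥ : Ideal A).jacobson, x * y = 0)
    (hinf : Subalgebra.toSubmodule A_s ⊓ jacobsonRadical k A = ⊥)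
    (hsup : Subalgebra.toSubmodule A_s ⊔ jacobsonRadical k A = ⊤) :
    ∃ e : fixSubgroup k A A_s ≃* bimodAutSubgroup k A A_s,
      ∀ (σ : fixSubgroup k A A_s) (x : jacobsonRadical k A),
        (((e σ : (jacobsonRadical k A) ≃ₗ[k] (jacobsonRadical k A)) x : A))
          = (σ : A ≃ₐ[k] A) x := by
  have hcompl : IsCompl (Subalgebra.toSubmodule A_s) (jacobsonRadical k A) :=
    ⟨disjoint_iff.mpr hinf, codisjoint_iff.mpr hsup⟩
  have hdecomp : ∀ x : A, ∃ s ∈ Subalgebra.toSubmodule A_s,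
      ∃ r ∈ jacobsonRadical k A, s + r = x := by
    intro x
    have hx : x ∈ Subalgebra.toSubmodule A_s ⊔ jacobsonRadical k A := by
      rw [hsup]; trivial
    exact Submodule.mem_sup.mp hx
  have hinj : Function.Injective (restHom k A A_s) := by
    intro σ τ h
    have h' : restEquiv k A σ.val = restEquiv k A τ.val := congrArg Subtype.val h
    refine Subtype.ext (AlgEquiv.ext fun x => ?_)
    obtain ⟨s, hs, r, hr, rfl⟩ := hdecomp x
    have hJr : (σ.val : A ≃ₐ[k] A) r = (τ.val : A ≃ₐ[k] A) r := by
      have := congrArg (fun f : jacobsonRadical k A ≃ₗ[k] jacobsonRadical k A =>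
        ((f ⟨r, hr⟩ : jacobsonRadical k A) : A)) h'
      simpa [restEquiv_apply] using this
    rw [map_add, map_add, σ.2 s hs, τ.2 s hs, hJr]
  have hsurj : Function.Surjective (restHom k A A_s) := by
    rintro ⟨ψ, hψ⟩
    set e := buildEquiv k A A_s hcompl ψ with he
    have he_s : ∀ s : A, s ∈ A_s → e s = s := by
      intro s hs
      have := buildEquiv_apply k A A_s hcompl ψ ⟨s, hs⟩ 0
      simpa using this
    have he_r : ∀ r : jacobsonRadical k A, e r = ψ r := by
      intro r
      have := buildEquiv_apply k A A_s hcompl ψ 0 r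
      simpa using this
    have h1 : e 1 = 1 := he_s 1 A_s.one_mem
    have hmul : ∀ x y : A, e (x * y) = e x * e y := by
      intro x y
      obtain ⟨s, hs, r, hr, rfl⟩ := hdecomp x
      obtain ⟨s', hs', r', hr', rfl⟩ := hdecomp y
      have hrr' : r * r' = 0 := hJ2 r hr r' hr'
      have hsr' : s * r' ∈ jacobsonRadical k A := Ideal.mul_mem_left _ s hr'
      have hrs' : r * s' ∈ jacobsonRadical k A := jacobsonRadical.mul_mem_right k A s' hr
      have hss' : s * s' ∈ A_s := A_s.mul_mem hs hs'
      have hx : (s + r) * (s' + r') = (s * s') + (s * r' + r * s') := by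
        rw [add_mul, mul_add, mul_add, hrr', add_zero, add_assoc]
      rw [hx]
      have hsum : (s * s') + (s * r' + r * s')
          = ((⟨s * s', hss'⟩ : Subalgebra.toSubmodule A_s) : A)
            + ((⟨s * r' + r * s', Submodule.add_mem _ hsr' hrs'⟩ : jacobsonRadical k A) : A) := rfl
      rw [hsum, buildEquiv_apply]
      have hdec1 : (s + r : A) = ((⟨s, hs⟩ : Subalgebra.toSubmodule A_s) : A)
          + ((⟨r, hr⟩ : jacobsonRadical k A) : A) := rfl
      have hdec2 : (s' + r' : A) = ((⟨s', hs'⟩ : Subalgebra.toSubmodule A_s) : A)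
          + ((⟨r', hr'⟩ : jacobsonRadical k A) : A) := rfl
      rw [hdec1, hdec2, buildEquiv_apply, buildEquiv_apply]
      have hpsiadd : ψ (⟨s * r' + r * s', Submodule.add_mem _ hsr' hrs'⟩ : jacobsonRadical k A)
          = ψ ⟨s * r', hsr'⟩ + ψ ⟨r * s', hrs'⟩ := by
        rw [← map_add]
        rfl
      have hmem1 : ((⟨s, hs⟩ : A_s) : A) * ((⟨r', hr'⟩ : jacobsonRadical k A) : A)
          * ((1 : A_s) : A) ∈ jacobsonRadical k A := by
        simpa using hsr'
      have hb1 := hψ ⟨s, hs⟩ 1 ⟨r', hr'⟩ hmem1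
      have hψ1 : (ψ ⟨s * r', hsr'⟩ : A) = s * (ψ ⟨r', hr'⟩ : A) := by
        have hkey : (⟨s * r', hsr'⟩ : jacobsonRadical k A)
            = ⟨((⟨s, hs⟩ : A_s) : A) * ((⟨r', hr'⟩ : jacobsonRadical k A) : A)
              * ((1 : A_s) : A), hmem1⟩ := by
          refine Subtype.ext ?_
          simp
        rw [hkey, hb1]
        simp
      have hmem2 : ((1 : A_s) : A) * ((⟨r, hr⟩ : jacobsonRadical k A) : A)
          * ((⟨s', hs'⟩ : A_s) : A) ∈ jacobsonRadical k A := by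
        simpa using hrs'
      have hb2 := hψ 1 ⟨s', hs'⟩ ⟨r, hr⟩ hmem2
      have hψ2 : (ψ ⟨r * s', hrs'⟩ : A) = (ψ ⟨r, hr⟩ : A) * s' := by
        have hkey : (⟨r * s', hrs'⟩ : jacobsonRadical k A)
            = ⟨((1 : A_s) : A) * ((⟨r, hr⟩ : jacobsonRadical k A) : A)
              * ((⟨s', hs'⟩ : A_s) : A), hmem2⟩ := by
          refine Subtype.ext ?_
          simp
        rw [hkey, hb2]
        simp
      have hzero : (ψ ⟨r, hr⟩ : A) * (ψ ⟨r', hr'⟩ : A) = 0 :=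
        hJ2 _ (ψ ⟨r, hr⟩).2 _ (ψ ⟨r', hr'⟩).2
      push_cast [hpsiadd]
      rw [hψ1, hψ2]
      rw [add_mul, mul_add, mul_add, hzero, add_zero, add_assoc]
    refine ⟨⟨AlgEquiv.ofLinearEquiv e h1 hmul, fun a ha => he_s a ha⟩, ?_⟩
    refine Subtype.ext (LinearEquiv.ext fun x => Subtype.ext ?_)
    show (AlgEquiv.ofLinearEquiv e h1 hmul) (x : A) = (ψ x : A)
    rw [AlgEquiv.ofLinearEquiv_apply]
    exact he_r x
  refine ⟨MulEquiv.ofBijective (restHom k A A_s) ⟨hinj, hsurj⟩, fun σ x => rfl⟩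

end
end

section
/- Let k be a field, n ≥ 1, and let f_1,…,f_m ∈ k[X_1,…,X_n] be homogeneous polynomials of degrees d_1,…,d_m with 2 ≤ d_i < l for each i, not all zero, and set I = ⟨X_1,…,X_n⟩^l + ⟨f_1,…,f_m⟩. Suppose there is an index s such that f_s ≠ 0 and d_s < d_i for all i ≠ s (a unique generator of minimal degree). Then: (a) for every M ∈ GL_n(k) with F_M(I) ⊆ I there exists α ∈ k^× such that F_M(f_s) = α·f_s; and (b) if M ∈ GL_n(k) satisfies F_M(f_i) = α_i·f_i with α_i ∈ k^× for every i, then F_M(I) ⊆ I. -/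
open MvPolynomial

section Aux

variable {σ R : Type*} [CommRing R]

/-- Homogeneous component of a product with a homogeneous polynomial. -/
lemma hc_mul_homog {q : MvPolynomial σ R} {dq : ℕ} (hq : q.IsHomogeneous dq)
    (p : MvPolynomial σ R) (e : ℕ) :
    homogeneousComponent e (p * q) =
      if dq ≤ e then homogeneousComponent (e - dq) p * q else 0 := by
  conv_lhs => rw [← p.sum_homogeneousComponent, Finset.sum_mul, map_sum]
  have key : ∀ i : ℕ, homogeneousComponent e (homogeneousComponent i p * q)
      = if e = i + dq then homogeneousComponent i p * q else 0 := fun i =>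
    homogeneousComponent_of_mem
      ((homogeneousComponent_isHomogeneous i p).mul hq)
  simp_rw [key]
  by_cases hde : dq ≤ e
  · rw [if_pos hde]
    have hcond : ∀ i : ℕ, (e = i + dq) = (i = e - dq) := by
      intro i; apply propext; omega
    simp_rw [hcond]
    rw [Finset.sum_ite_eq' (Finset.range (p.totalDegree + 1)) (e - dq)
      (fun i => homogeneousComponent i p * q)]
    by_cases hmem : e - dq ∈ Finset.range (p.totalDegree + 1)
    · rw [if_pos hmem]
    · rw [if_neg hmem]
      rw [Finset.mem_range, not_lt] at hmem
      rw [homogeneousComponent_eq_zero _ p (by omega), zero_mul]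
  · rw [if_neg hde]
    refine Finset.sum_eq_zero fun i _ => if_neg (by omega)

lemma constantCoeff_of_mem_span_X {p : MvPolynomial σ R}
    (hp : p ∈ Ideal.span (Set.range (X : σ → MvPolynomial σ R))) :
    constantCoeff p = 0 := by
  have : Ideal.span (Set.range (X : σ → MvPolynomial σ R)) ≤
      RingHom.ker (constantCoeff : MvPolynomial σ R →+* R) := by
    rw [Ideal.span_le]
    rintro _ ⟨i, rfl⟩
    simp [RingHom.mem_ker]
  exact this hp

lemma hc_mem_pow_span_X {l e : ℕ} (hel : e < l) {p : MvPolynomial σ R}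
    (hp : p ∈ (Ideal.span (Set.range (X : σ → MvPolynomial σ R))) ^ l) :
    homogeneousComponent e p = 0 := by
  induction l generalizing e p with
  | zero => omega
  | succ l ih =>
    rw [pow_succ] at hp
    refine Submodule.mul_induction_on hp ?_ ?_
    · intro x hx y hy
      conv_lhs => rw [← y.sum_homogeneousComponent, Finset.mul_sum, map_sum]
      refine Finset.sum_eq_zero fun j _ => ?_
      rcases Nat.eq_zero_or_pos j with hj | hj
      · subst hj
        rw [homogeneousComponent_zero, show coeff 0 y = constantCoeff y from rfl,
          constantCoeff_of_mem_span_X hy, map_zero, mul_zero, map_zero]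
      · rw [hc_mul_homog (homogeneousComponent_isHomogeneous j y) x e]
        by_cases hje : j ≤ e
        · rw [if_pos hje, ih (by omega) hx, zero_mul]
        · rw [if_neg hje]
    · intro x y hx hy
      rw [map_add, hx, hy, add_zero]

end Aux

lemma aeval_GL_leftinv {k : Type*} [Field k] {n : ℕ} (M : GL (Fin n) k)
    (p : MvPolynomial (Fin n) k) :
    aeval (fun j => ∑ i, C (((M⁻¹ : GL (Fin n) k) : Matrix (Fin n) (Fin n) k) i j) * X i)
      (aeval (fun j => ∑ i, C ((M : Matrix (Fin n) (Fin n) k) i j) * X i) p) = p := by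
  set Nv : Matrix (Fin n) (Fin n) k := ((M⁻¹ : GL (Fin n) k) : Matrix (Fin n) (Fin n) k)
  set Mv : Matrix (Fin n) (Fin n) k := (M : Matrix (Fin n) (Fin n) k)
  have hNM : Nv * Mv = 1 := M.inv_mul
  have key : (aeval (fun j => ∑ i, C (Nv i j) * X i)).comp
      (aeval (fun j => ∑ i, C (Mv i j) * X i)) =
      AlgHom.id k (MvPolynomial (Fin n) k) := by
    refine MvPolynomial.algHom_ext fun j => ?_
    simp only [AlgHom.comp_apply, AlgHom.id_apply, aeval_X, map_sum, map_mul, aeval_C,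
      algebraMap_eq]
    calc ∑ i, C (Mv i j) * ∑ t, C (Nv t i) * X t
        = ∑ i, ∑ t, C (Nv t i * Mv i j) * X t := by
          refine Finset.sum_congr rfl fun i _ => ?_
          rw [Finset.mul_sum]
          refine Finset.sum_congr rfl fun t _ => by rw [map_mul]; ring
      _ = ∑ t, (∑ i, C (Nv t i * Mv i j)) * X t := by
          rw [Finset.sum_comm]
          exact Finset.sum_congr rfl fun t _ => (Finset.sum_mul _ _ _).symm
      _ = ∑ t, C ((Nv * Mv) t j) * X t := by
          refine Finset.sum_congr rfl fun t _ => ?_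
          rw [← map_sum, Matrix.mul_apply]
      _ = X j := by
          rw [hNM]
          simp [Matrix.one_apply, apply_ite (C : k → MvPolynomial (Fin n) k)]
  exact DFunLike.congr_fun key p

/-- paper's Proposition 5.32: `∩ᵢ Sim(fᵢ) ⊆ Im(Φ_A) ⊆ Sim(f_s)`. Let
`f_1,…,f_m` be homogeneous polynomials of degrees `d_i` with `2 ≤ d_i < l`, not all zero, and
`I = ⟨X_1,…,X_n⟩^l + ⟨f_1,…,f_m⟩`.  Assume there is an index `s` with `f_s ≠ 0` and
`d_s < d_i` for all `i ≠ s`.  Then (a) every `M ∈ GL_n(k)` with `F_M(I) ⊆ I` satisfies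
`F_M f_s = α • f_s` for some `α ∈ k^×`; and (b) if `F_M f_i = α_i • f_i` with `α_i ∈ k^×` for
every `i`, then `F_M(I) ⊆ I`. -/
theorem stmt_10 (k : Type*) [Field k] (n l m : ℕ) (hn : 1 ≤ n)
    (f : Fin m → MvPolynomial (Fin n) k) (d : Fin m → ℕ)
    (hf : ∀ i, (f i).IsHomogeneous (d i)) (hd2 : ∀ i, 2 ≤ d i) (hdl : ∀ i, d i < l)
    (hnz : ∃ i, f i ≠ 0)
    (s : Fin m) (hs : f s ≠ 0) (hmin : ∀ i, i ≠ s → d s < d i)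
    (I : Ideal (MvPolynomial (Fin n) k))
    (hI : I = (Ideal.span (Set.range (X : Fin n → MvPolynomial (Fin n) k))) ^ l
            + Ideal.span (Set.range f)) :
    (∀ M : GL (Fin n) k,
        (∀ g ∈ I,
            aeval (fun j => ∑ i, C ((M : Matrix (Fin n) (Fin n) k) i j) * X i) g ∈ I) →
        ∃ α : kˣ,
          aeval (fun j => ∑ i, C ((M : Matrix (Fin n) (Fin n) k) i j) * X i) (f s)
            = (α : k) • f s) ∧
    (∀ M : GL (Fin n) k,
        (∀ i : Fin m, ∃ α : kˣ,
            aeval (fun j => ∑ i', C ((M : Matrix (Fin n) (Fin n) k) i' j) * X i') (f i)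
              = (α : k) • f i) →
        ∀ g ∈ I,
          aeval (fun j => ∑ i, C ((M : Matrix (Fin n) (Fin n) k) i j) * X i) g ∈ I) := by
  constructor
  · -- part (a)
    intro M hM
    set φ : MvPolynomial (Fin n) k →ₐ[k] MvPolynomial (Fin n) k :=
      aeval (fun j => ∑ i, C ((M : Matrix (Fin n) (Fin n) k) i j) * X i) with hφdef
    have hg1 : ∀ j, ((fun j => ∑ i, C ((M : Matrix (Fin n) (Fin n) k) i j) * X i) j :
        MvPolynomial (Fin n) k).IsHomogeneous 1 := fun j =>
      IsHomogeneous.sum _ _ _ fun i _ => isHomogeneous_C_mul_X _ _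
    have hFhom : (φ (f s)).IsHomogeneous (d s) := by
      simpa [hφdef] using (hf s).aeval _ hg1
    have hfsI : f s ∈ I := by
      rw [hI]
      exact Submodule.mem_sup_right (Ideal.subset_span ⟨s, rfl⟩)
    have hmem : φ (f s) ∈ I := hM (f s) hfsI
    rw [hI] at hmem
    obtain ⟨a, ha, b, hb, hab⟩ := Submodule.mem_sup.mp hmem
    obtain ⟨h, hh⟩ := Ideal.mem_span_range_iff_exists_fun.mp hb
    -- take the degree-(d s) homogeneous component
    have hcomp : φ (f s) = C (coeff 0 (h s)) * f s := by
      have h1 : homogeneousComponent (d s) (φ (f s)) = φ (f s) := by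
        rw [homogeneousComponent_of_mem hFhom, if_pos rfl]
      have h2 : homogeneousComponent (d s) a = 0 := hc_mem_pow_span_X (hdl s) ha
      have h3 : homogeneousComponent (d s) b = C (coeff 0 (h s)) * f s := by
        rw [← hh, map_sum]
        rw [Finset.sum_eq_single s]
        · rw [hc_mul_homog (hf s), if_pos le_rfl, Nat.sub_self, homogeneousComponent_zero]
        · intro i _ his
          rw [hc_mul_homog (hf i), if_neg (by have := hmin i his; omega)]
        · intro hsmem; exact absurd (Finset.mem_univ s) hsmem
      rw [← h1, ← hab, map_add, h2, h3, zero_add]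
    have hc0 : coeff 0 (h s) ≠ 0 := by
      intro hc
      rw [hc, map_zero, zero_mul] at hcomp
      have := aeval_GL_leftinv M (f s)
      rw [show aeval (fun j => ∑ i, C ((M : Matrix (Fin n) (Fin n) k) i j) * X i) (f s)
          = φ (f s) from rfl, hcomp, map_zero] at this
      exact hs this.symm
    exact ⟨Units.mk0 _ hc0, by rw [hcomp, smul_eq_C_mul, Units.val_mk0]⟩
  · -- part (b)
    intro M hα g hg
    set φ : MvPolynomial (Fin n) k →ₐ[k] MvPolynomial (Fin n) k :=
      aeval (fun j => ∑ i, C ((M : Matrix (Fin n) (Fin n) k) i j) * X i) with hφdef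
    have hmap : Ideal.map φ I ≤ I := by
      rw [hI, Submodule.add_eq_sup, Ideal.map_sup]
      refine sup_le (le_trans ?_ le_sup_left) (le_trans ?_ le_sup_right)
      · rw [Ideal.map_pow]
        refine Ideal.pow_right_mono ?_ l
        rw [Ideal.map_span, Ideal.span_le]
        rintro _ ⟨_, ⟨j, rfl⟩, rfl⟩
        have : φ (X j) = ∑ i, C ((M : Matrix (Fin n) (Fin n) k) i j) * X i := by
          simp [hφdef]
        rw [this]
        exact Submodule.sum_mem _ fun i _ =>
          Ideal.mul_mem_left _ _ (Ideal.subset_span ⟨i, rfl⟩)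
      · rw [Ideal.map_span, Ideal.span_le]
        rintro _ ⟨_, ⟨i, rfl⟩, rfl⟩
        obtain ⟨α, hαi⟩ := hα i
        show φ (f i) ∈ Ideal.span (Set.range f)
        rw [hαi, smul_eq_C_mul]
        exact Ideal.mul_mem_left _ _ (Ideal.subset_span ⟨i, rfl⟩)
    exact hmap (Ideal.mem_map_of_mem φ hg)
end
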